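/- Let X be a random variable uniform on {x_1, x_2} and let Π be a randomized map (Markov kernel) applied to X. Then I[X : Π(X)] ≥ h^2(Π(x_1), Π(x_2)), where Π(x_i) denotes the output distribution on input x_i. -/

import Mathlib

open scoped BigOperators

/-- Probability that random variable `X` takes value `x` under pmf `p` on `Ω`. -/
noncomputable def prob {Ω α : Type*} [Fintype Ω] [DecidableEq α]
    (p : Ω → ℝ) (X : Ω → α) (x : α) : ℝ :=
  ∑ ω, if X ω = x then p ω else 0

/-- Shannon entropy (base 2) of random variable `X` under pmf `p`. -/
noncomputable def entropy {Ω α : Type*} [Fintype Ω] [Fintype α] [DecidableEq α]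
    (p : Ω → ℝ) (X : Ω → α) : ℝ :=
  -∑ x, prob p X x * Real.logb 2 (prob p X x)

/-- Mutual information I[X : Y]. -/
noncomputable def mutualInfo {Ω α β : Type*} [Fintype Ω] [Fintype α] [Fintype β]
    [DecidableEq α] [DecidableEq β] (p : Ω → ℝ) (X : Ω → α) (Y : Ω → β) : ℝ :=
  entropy p X + entropy p Y - entropy p (fun ω => (X ω, Y ω))

/-- Conditional mutual information I[X : Y | Z] = H(X,Z) + H(Y,Z) - H(X,Y,Z) - H(Z). -/
noncomputable def condMutualInfo {Ω α β γ : Type*} [Fintype Ω] [Fintype α] [Fintype β] [Fintype γ]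
    [DecidableEq α] [DecidableEq β] [DecidableEq γ]
    (p : Ω → ℝ) (X : Ω → α) (Y : Ω → β) (Z : Ω → γ) : ℝ :=
  entropy p (fun ω => (X ω, Z ω)) + entropy p (fun ω => (Y ω, Z ω))
    - entropy p (fun ω => (X ω, Y ω, Z ω)) - entropy p Z
open scoped BigOperators

/-- Hellinger distance between two nonnegative functions on a finite sample space. -/
noncomputable def hellinger {Ω : Type*} [Fintype Ω] (P Q : Ω → ℝ) : ℝ :=
  Real.sqrt ((1/2) * ∑ ω, (Real.sqrt (P ω) - Real.sqrt (Q ω))^2)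

/-- `P` is a probability mass function on the finite type `Ω`. -/
def IsPMF {Ω : Type*} [Fintype Ω] (P : Ω → ℝ) : Prop :=
  (∀ ω, 0 ≤ P ω) ∧ ∑ ω, P ω = 1


/-- For 0 < u ≤ 1, -2 log u ≤ 1/u - u. -/
lemma aux1 (u : ℝ) (hu : 0 < u) (hu1 : u ≤ 1) : -2 * Real.log u ≤ 1/u - u := by
  have key : AntitoneOn (fun u : ℝ => u⁻¹ - u + 2 * Real.log u) (Set.Ioc 0 1) := by
    apply antitoneOn_of_deriv_nonpos (convex_Ioc 0 1)
    · apply ContinuousOn.add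
      · exact ContinuousOn.sub (continuousOn_inv₀.mono (by intro x hx; exact ne_of_gt hx.1)) continuousOn_id
      · exact (Real.continuousOn_log.mono (by intro x hx; exact ne_of_gt hx.1)).const_smul 2 |>.congr (by intro x hx; simp [smul_eq_mul])
    · intro x hx
      rw [interior_Ioc] at hx
      have hx0 : x ≠ 0 := ne_of_gt hx.1
      exact ((hasDerivAt_inv hx0).sub (hasDerivAt_id x)).add
        ((Real.hasDerivAt_log hx0).const_mul 2) |>.differentiableAt.differentiableWithinAt
    · intro x hx
      rw [interior_Ioc] at hx
      have hx0 : x ≠ 0 := ne_of_gt hx.1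
      have hd : HasDerivAt (fun u : ℝ => u⁻¹ - u + 2 * Real.log u) (-(x^2)⁻¹ - 1 + 2 * x⁻¹) x := by
        exact ((hasDerivAt_inv hx0).sub (hasDerivAt_id x)).add ((Real.hasDerivAt_log hx0).const_mul 2)
      rw [hd.deriv]
      have h2 : (0:ℝ) < x^2 := by positivity
      have hx1 : x * x⁻¹ = 1 := mul_inv_cancel₀ hx0
      have hx2 : x^2 * (x^2)⁻¹ = 1 := mul_inv_cancel₀ (ne_of_gt h2)
      nlinarith [sq_nonneg (1 - x), hx.1, mul_pos hx.1 hx.1]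
  have h := key (Set.mem_Ioc.mpr ⟨hu, hu1⟩) (Set.mem_Ioc.mpr ⟨one_pos, le_refl 1⟩) hu1
  simp at h
  have : 1/u = u⁻¹ := one_div u
  linarith [h]

lemma aux2 (y : ℝ) (h0 : 0 ≤ y) (h1 : y < 1) :
    y^2 ≤ (1+y) * Real.log (1+y) + (1-y) * Real.log (1-y) := by
  -- first: g(y) = log(1+y) - log(1-y) - 2y ≥ 0 on [0,1)
  have hg : ∀ z ∈ Set.Ico (0:ℝ) 1, 0 ≤ Real.log (1+z) - Real.log (1-z) - 2*z := by
    have key : MonotoneOn (fun z : ℝ => Real.log (1+z) - Real.log (1-z) - 2*z) (Set.Ico 0 1) := by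
      apply monotoneOn_of_deriv_nonneg (convex_Ico 0 1)
      · apply ContinuousOn.sub
        apply ContinuousOn.sub
        · exact (Real.continuousOn_log.comp (by fun_prop) (by intro x hx; simp only [Set.mem_Ico] at hx; simp; intro h; linarith)).congr (fun x hx => rfl)
        · exact (Real.continuousOn_log.comp (by fun_prop) (by intro x hx; simp only [Set.mem_Ico] at hx; simp; intro h; linarith)).congr (fun x hx => rfl)
        · fun_prop
      · intro x hx
        rw [interior_Ico] at hx
        obtain ⟨hx0, hx1⟩ := hx
        have d1 : HasDerivAt (fun z : ℝ => Real.log (1+z)) (1+x)⁻¹ x := by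
          have := (Real.hasDerivAt_log (by linarith : (1:ℝ)+x ≠ 0)).comp x ((hasDerivAt_id x).const_add 1)
          simpa [Function.comp_def] using this
        have d2 : HasDerivAt (fun z : ℝ => Real.log (1-z)) (-(1-x)⁻¹) x := by
          have := (Real.hasDerivAt_log (by intro h; linarith : (1:ℝ)-x ≠ 0)).comp x ((hasDerivAt_id x).neg.const_add 1)
          simpa [Function.comp_def] using this
        exact ((d1.sub d2).sub ((hasDerivAt_id x).const_mul 2)).differentiableAt.differentiableWithinAt
      · intro x hx
        rw [interior_Ico] at hx
        obtain ⟨hx0, hx1⟩ := hx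
        have d1 : HasDerivAt (fun z : ℝ => Real.log (1+z)) (1+x)⁻¹ x := by
          have := (Real.hasDerivAt_log (by linarith : (1:ℝ)+x ≠ 0)).comp x ((hasDerivAt_id x).const_add 1)
          simpa [Function.comp_def] using this
        have d2 : HasDerivAt (fun z : ℝ => Real.log (1-z)) (-(1-x)⁻¹) x := by
          have := (Real.hasDerivAt_log (by intro h; linarith : (1:ℝ)-x ≠ 0)).comp x ((hasDerivAt_id x).neg.const_add 1)
          simpa [Function.comp_def] using this
        have hd : HasDerivAt (fun z : ℝ => Real.log (1+z) - Real.log (1-z) - 2*z)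
            ((1+x)⁻¹ - (-(1-x)⁻¹) - 2*1) x := (d1.sub d2).sub ((hasDerivAt_id x).const_mul 2)
        rw [hd.deriv]
        have ha : (0:ℝ) < 1+x := by linarith
        have hb : (0:ℝ) < 1-x := by linarith
        have ha' : (1+x) * (1+x)⁻¹ = 1 := mul_inv_cancel₀ (ne_of_gt ha)
        have hb' : (1-x) * (1-x)⁻¹ = 1 := mul_inv_cancel₀ (ne_of_gt hb)
        nlinarith [sq_nonneg x, mul_pos ha hb, inv_pos.mpr ha, inv_pos.mpr hb,
          mul_pos (inv_pos.mpr ha) (inv_pos.mpr hb), sq_nonneg (x*((1+x)⁻¹*(1-x)⁻¹))]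
    intro z hz
    have := key (Set.mem_Ico.mpr ⟨le_refl 0, one_pos⟩) hz hz.1
    simpa using this
  -- second: psi(y) ≥ 0
  have key : MonotoneOn (fun z : ℝ => (1+z) * Real.log (1+z) + (1-z) * Real.log (1-z) - z^2) (Set.Ico 0 1) := by
    apply monotoneOn_of_deriv_nonneg (convex_Ico 0 1)
    · apply ContinuousOn.sub
      apply ContinuousOn.add
      · apply ContinuousOn.mul (by fun_prop)
        exact (Real.continuousOn_log.comp (by fun_prop) (by intro x hx; simp only [Set.mem_Ico] at hx; simp; intro h; linarith)).congr (fun x hx => rfl)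
      · apply ContinuousOn.mul (by fun_prop)
        exact (Real.continuousOn_log.comp (by fun_prop) (by intro x hx; simp only [Set.mem_Ico] at hx; simp; intro h; linarith)).congr (fun x hx => rfl)
      · fun_prop
    · intro x hx
      rw [interior_Ico] at hx
      obtain ⟨hx0, hx1⟩ := hx
      have d1 : HasDerivAt (fun z : ℝ => Real.log (1+z)) (1+x)⁻¹ x := by
        have := (Real.hasDerivAt_log (by linarith : (1:ℝ)+x ≠ 0)).comp x ((hasDerivAt_id x).const_add 1)
        simpa [Function.comp_def] using this
      have d2 : HasDerivAt (fun z : ℝ => Real.log (1-z)) (-(1-x)⁻¹) x := by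
        have := (Real.hasDerivAt_log (by intro h; linarith : (1:ℝ)-x ≠ 0)).comp x ((hasDerivAt_id x).neg.const_add 1)
        simpa [Function.comp_def] using this
      have e1 : HasDerivAt (fun z : ℝ => 1+z) 1 x := (hasDerivAt_id x).const_add 1
      have e2 : HasDerivAt (fun z : ℝ => 1-z) (-1) x := by
        simpa using ((hasDerivAt_id' x).const_sub 1)
      exact (((e1.mul d1).add (e2.mul d2)).sub ((hasDerivAt_pow 2 x))).differentiableAt.differentiableWithinAt
    · intro x hx
      rw [interior_Ico] at hx
      obtain ⟨hx0, hx1⟩ := hx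
      have ha : (0:ℝ) < 1+x := by linarith
      have hb : (0:ℝ) < 1-x := by linarith
      have d1 : HasDerivAt (fun z : ℝ => Real.log (1+z)) (1+x)⁻¹ x := by
        have := (Real.hasDerivAt_log (ne_of_gt ha)).comp x ((hasDerivAt_id x).const_add 1)
        simpa [Function.comp_def] using this
      have d2 : HasDerivAt (fun z : ℝ => Real.log (1-z)) (-(1-x)⁻¹) x := by
        have := (Real.hasDerivAt_log (ne_of_gt hb)).comp x ((hasDerivAt_id x).neg.const_add 1)
        simpa [Function.comp_def] using this
      have e1 : HasDerivAt (fun z : ℝ => 1+z) 1 x := (hasDerivAt_id x).const_add 1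
      have e2 : HasDerivAt (fun z : ℝ => 1-z) (-1) x := by
        simpa using ((hasDerivAt_id' x).const_sub 1)
      have hd : HasDerivAt (fun z : ℝ => (1+z) * Real.log (1+z) + (1-z) * Real.log (1-z) - z^2)
          ((1 * Real.log (1+x) + (1+x) * (1+x)⁻¹) + ((-1) * Real.log (1-x) + (1-x) * (-(1-x)⁻¹)) - 2 * x^1) x :=
        ((e1.mul d1).add (e2.mul d2)).sub (hasDerivAt_pow 2 x)
      rw [hd.deriv]
      have ha' : (1+x) * (1+x)⁻¹ = 1 := mul_inv_cancel₀ (ne_of_gt ha)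
      have hb' : (1-x) * (1-x)⁻¹ = 1 := mul_inv_cancel₀ (ne_of_gt hb)
      have hgx := hg x (Set.mem_Ico.mpr ⟨le_of_lt hx0, hx1⟩)
      rw [ha', mul_neg, hb']
      ring_nf
      ring_nf at hgx
      linarith
  have := key (Set.mem_Ico.mpr ⟨le_refl 0, one_pos⟩) (Set.mem_Ico.mpr ⟨h0, h1⟩) h0
  simp at this
  linarith

lemma sqrt_one_sub (x : ℝ) (h0 : 0 ≤ x) (h1 : x ≤ 1) :
    1 - x/2 - x^2/2 ≤ Real.sqrt (1-x) := by
  rcases le_or_gt (1 - x/2 - x^2/2) 0 with h | h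
  · exact le_trans h (Real.sqrt_nonneg _)
  · rw [Real.le_sqrt (le_of_lt h) (by linarith)]
    nlinarith [sq_nonneg x]

lemma caseB (a : ℝ) (ha : 0 < a) (hle : a ≤ 1/2) (hs : 1/5 < a*(1-a)) :
    -(a * Real.log a) - (1-a) * Real.log (1-a) ≤ 2 * Real.log 2 * Real.sqrt (a*(1-a)) := by
  set y : ℝ := 1 - 2*a with hy
  have hy0 : 0 ≤ y := by simp [hy]; linarith
  have hy1 : y < 1 := by simp [hy]; linarith
  have h2 := aux2 y hy0 hy1
  have e1 : (1:ℝ) + y = 2 * (1-a) := by rw [hy]; ring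
  have e2 : (1:ℝ) - y = 2 * a := by rw [hy]; ring
  have ha' : (0:ℝ) < 1 - a := by linarith
  rw [e1, e2, Real.log_mul two_ne_zero (ne_of_gt ha'), Real.log_mul two_ne_zero (ne_of_gt ha)] at h2
  -- h2 : y^2 ≤ 2(1-a)(log2 + log(1-a)) + 2a(log2 + log a)
  have step1 : -(a * Real.log a) - (1-a) * Real.log (1-a) ≤ Real.log 2 - y^2/2 := by
    nlinarith [h2]
  have hyx : a * (1-a) = (1 - y^2)/4 := by rw [hy]; ring
  have hy2 : y^2 < 1/5 := by nlinarith [hs]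
  have hsq4 : Real.sqrt (1/4 : ℝ) = 1/2 := by
    rw [show (1/4:ℝ) = (1/2)^2 by norm_num, Real.sqrt_sq (by norm_num)]
  have hrs : Real.sqrt (a*(1-a)) = Real.sqrt (1 - y^2) / 2 := by
    rw [hyx, show (1 - y^2)/4 = (1-y^2) * (1/4) by ring,
      Real.sqrt_mul (by nlinarith : (0:ℝ) ≤ 1 - y^2), hsq4]
    ring
  have hsb := sqrt_one_sub (y^2) (sq_nonneg y) (by nlinarith)
  have hl2 : (0:ℝ) < Real.log 2 := Real.log_pos (by norm_num)
  have step2 : Real.log 2 - y^2/2 ≤ 2 * Real.log 2 * Real.sqrt (a*(1-a)) := by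
    rw [hrs]
    have : 2 * Real.log 2 * (Real.sqrt (1 - y^2) / 2) = Real.log 2 * Real.sqrt (1 - y^2) := by ring
    rw [this]
    have hmul : Real.log 2 * (1 - y^2/2 - (y^2)^2/2) ≤ Real.log 2 * Real.sqrt (1 - y^2) :=
      mul_le_mul_of_nonneg_left hsb (le_of_lt hl2)
    have : Real.log 2 - y^2/2 ≤ Real.log 2 * (1 - y^2/2 - (y^2)^2/2) := by
      nlinarith [Real.log_two_lt_d9, sq_nonneg y, hy2]
    linarith
  linarith

lemma entropy_le (a : ℝ) (h0 : 0 ≤ a) (h1 : a ≤ 1) :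
    -(a * Real.log a) - (1-a) * Real.log (1-a) ≤ 2 * Real.log 2 * Real.sqrt (a*(1-a)) := by
  have hl2 : (0:ℝ) < Real.log 2 := Real.log_pos (by norm_num)
  rcases eq_or_lt_of_le h0 with rfl | ha
  · simp
  rcases eq_or_lt_of_le h1 with rfl | ha1
  · simp
  have hb : (0:ℝ) < 1 - a := by linarith
  by_cases hsplit : a * (1-a) ≤ 1/5
  · -- Case A
    have sa0 : 0 < Real.sqrt a := Real.sqrt_pos.mpr ha
    have sb0 : 0 < Real.sqrt (1-a) := Real.sqrt_pos.mpr hb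
    have sa2 : Real.sqrt a ^ 2 = a := Real.sq_sqrt (le_of_lt ha)
    have sb2 : Real.sqrt (1-a) ^ 2 = (1-a) := Real.sq_sqrt (le_of_lt hb)
    have hA : -(a * Real.log a) ≤ Real.sqrt a * (1-a) := by
      have := aux1 (Real.sqrt a) sa0 (Real.sqrt_le_one.mpr h1)
      have hla : Real.log a = 2 * Real.log (Real.sqrt a) := by
        rw [Real.log_sqrt (le_of_lt ha)]; ring
      -- -2 log √a ≤ 1/√a - √a ; multiply by a
      have hmul : a * (-2 * Real.log (Real.sqrt a)) ≤ a * (1/Real.sqrt a - Real.sqrt a) :=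
        mul_le_mul_of_nonneg_left this (le_of_lt ha)
      have key : a * (1/Real.sqrt a - Real.sqrt a) = Real.sqrt a * (1-a) := by
        field_simp
        nlinarith [sa2]
      rw [key] at hmul
      nlinarith [hmul, hla]
    have hB : -((1-a) * Real.log (1-a)) ≤ Real.sqrt (1-a) * a := by
      have := aux1 (Real.sqrt (1-a)) sb0 (Real.sqrt_le_one.mpr (by linarith))
      have hla : Real.log (1-a) = 2 * Real.log (Real.sqrt (1-a)) := by
        rw [Real.log_sqrt (le_of_lt hb)]; ring
      have hmul : (1-a) * (-2 * Real.log (Real.sqrt (1-a))) ≤ (1-a) * (1/Real.sqrt (1-a) - Real.sqrt (1-a)) :=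
        mul_le_mul_of_nonneg_left this (le_of_lt hb)
      have key : (1-a) * (1/Real.sqrt (1-a) - Real.sqrt (1-a)) = Real.sqrt (1-a) * a := by
        field_simp
        nlinarith [sb2]
      rw [key] at hmul
      nlinarith [hmul, hla]
    have hprod : Real.sqrt (a*(1-a)) = Real.sqrt a * Real.sqrt (1-a) :=
      Real.sqrt_mul (le_of_lt ha) _
    have hid : Real.sqrt a * (1-a) + Real.sqrt (1-a) * a
        = Real.sqrt (a*(1-a)) * (Real.sqrt a + Real.sqrt (1-a)) := by
      rw [hprod]
      nlinarith [sa2, sb2]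
    have hbound : Real.sqrt a + Real.sqrt (1-a) ≤ 2 * Real.log 2 := by
      have hs : Real.sqrt (a*(1-a)) ≤ 0.448 := by
        rw [show (0.448:ℝ) = Real.sqrt (0.448^2) from (Real.sqrt_sq (by norm_num)).symm]
        exact Real.sqrt_le_sqrt (by nlinarith)
      have hsq : (Real.sqrt a + Real.sqrt (1-a))^2 = 1 + 2 * Real.sqrt (a*(1-a)) := by
        rw [hprod]; nlinarith [sa2, sb2]
      have hA' : (Real.sqrt a + Real.sqrt (1-a))^2 ≤ (1.896:ℝ) := by rw [hsq]; linarith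
      have hB' : (1.896:ℝ) ≤ (2 * Real.log 2)^2 := by nlinarith [Real.log_two_gt_d9]
      have := (pow_le_pow_iff_left₀ (by positivity : (0:ℝ) ≤ Real.sqrt a + Real.sqrt (1-a))
        (by positivity : (0:ℝ) ≤ 2 * Real.log 2) (two_ne_zero)).mp (le_trans hA' hB')
      exact this
    have hs0 : 0 ≤ Real.sqrt (a*(1-a)) := Real.sqrt_nonneg _
    calc -(a * Real.log a) - (1-a) * Real.log (1-a)
        ≤ Real.sqrt a * (1-a) + Real.sqrt (1-a) * a := by linarith
      _ = Real.sqrt (a*(1-a)) * (Real.sqrt a + Real.sqrt (1-a)) := hid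
      _ ≤ Real.sqrt (a*(1-a)) * (2 * Real.log 2) := mul_le_mul_of_nonneg_left hbound hs0
      _ = 2 * Real.log 2 * Real.sqrt (a*(1-a)) := by ring
  · push_neg at hsplit
    rcases le_total a (1/2) with hle | hge
    · exact caseB a ha hle hsplit
    · have := caseB (1-a) hb (by linarith) (by nlinarith)
      have e : (1:ℝ) - (1-a) = a := by ring
      rw [e] at this
      have e2 : (1-a) * a = a * (1-a) := by ring
      rw [e2] at this
      linarith

lemma pointwise (p q : ℝ) (hp : 0 ≤ p) (hq : 0 ≤ q) :
    Real.log 2 * ((Real.sqrt p - Real.sqrt q)^2 / 2) ≤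
      p/2 * (Real.log p - Real.log ((p+q)/2)) + q/2 * (Real.log q - Real.log ((p+q)/2)) := by
  have hl2 : (0:ℝ) < Real.log 2 := Real.log_pos (by norm_num)
  rcases eq_or_lt_of_le hp with rfl | hp'
  · rcases eq_or_lt_of_le hq with rfl | hq'
    · simp
    · have : Real.log ((0+q)/2) = Real.log q - Real.log 2 :=
        by rw [zero_add, Real.log_div (ne_of_gt hq') two_ne_zero]
      rw [this]
      have : (Real.sqrt 0 - Real.sqrt q)^2 = q := by
        rw [Real.sqrt_zero]; nlinarith [Real.sq_sqrt (le_of_lt hq')]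
      rw [this]
      ring_nf
      nlinarith [hl2, hq']
  · rcases eq_or_lt_of_le hq with rfl | hq'
    · have : Real.log ((p+0)/2) = Real.log p - Real.log 2 :=
        by rw [add_zero, Real.log_div (ne_of_gt hp') two_ne_zero]
      rw [this]
      have : (Real.sqrt p - Real.sqrt 0)^2 = p := by
        rw [Real.sqrt_zero]; nlinarith [Real.sq_sqrt (le_of_lt hp')]
      rw [this]
      ring_nf
      nlinarith [hl2, hp']
    · -- both positive
      set s : ℝ := p + q with hs
      have hs0 : (0:ℝ) < s := by positivity
      set a : ℝ := p / s with ha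
      have ha0 : 0 < a := by positivity
      have ha1 : a ≤ 1 := by rw [ha, div_le_one hs0]; linarith
      have h1a : 1 - a = q / s := by rw [ha]; field_simp; rw [hs]; ring
      have E := entropy_le a (le_of_lt ha0) ha1
      have la : Real.log a = Real.log p - Real.log s := Real.log_div (ne_of_gt hp') (ne_of_gt hs0)
      have lb : Real.log (1-a) = Real.log q - Real.log s := by
        rw [h1a]; exact Real.log_div (ne_of_gt hq') (ne_of_gt hs0)
      have hprod : a * (1-a) = p * q / s^2 := by rw [h1a, ha]; field_simp
      have hsor : Real.sqrt (a*(1-a)) = Real.sqrt (p*q) / s := by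
        rw [hprod, Real.sqrt_div (by positivity), Real.sqrt_sq (le_of_lt hs0)]
      rw [la, lb, hsor] at E
      have E2 := mul_le_mul_of_nonneg_left E (by positivity : (0:ℝ) ≤ s/2)
      have eL : s/2 * (-(a * (Real.log p - Real.log s)) - (1-a) * (Real.log q - Real.log s))
          = -(p * (Real.log p - Real.log s))/2 - q * (Real.log q - Real.log s)/2 := by
        rw [h1a, ha]; field_simp
      have eR : s/2 * (2 * Real.log 2 * (Real.sqrt (p*q) / s)) = Real.log 2 * Real.sqrt (p*q) := by
        field_simp
      rw [eL, eR] at E2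
      have lm : Real.log ((p+q)/2) = Real.log s - Real.log 2 := by
        rw [← hs]; exact Real.log_div (ne_of_gt hs0) two_ne_zero
      rw [lm]
      have hexp : (Real.sqrt p - Real.sqrt q)^2 = p + q - 2 * Real.sqrt (p*q) := by
        rw [Real.sqrt_mul hp]
        nlinarith [Real.sq_sqrt hp, Real.sq_sqrt hq]
      rw [hexp]
      ring_nf at E2 ⊢
      linarith [E2]

lemma pointwise2 (p q : ℝ) (hp : 0 ≤ p) (hq : 0 ≤ q) :
    (Real.sqrt p - Real.sqrt q)^2 / 2 ≤
      p/2 * (Real.logb 2 p - Real.logb 2 ((p+q)/2)) + q/2 * (Real.logb 2 q - Real.logb 2 ((p+q)/2)) := by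
  have hl2 : (0:ℝ) < Real.log 2 := Real.log_pos (by norm_num)
  have h := pointwise p q hp hq
  rw [← sub_nonneg]
  rw [← sub_nonneg] at h
  have key : p/2 * (Real.logb 2 p - Real.logb 2 ((p+q)/2)) + q/2 * (Real.logb 2 q - Real.logb 2 ((p+q)/2))
      - (Real.sqrt p - Real.sqrt q)^2/2
      = (p/2 * (Real.log p - Real.log ((p+q)/2)) + q/2 * (Real.log q - Real.log ((p+q)/2))
        - Real.log 2 * ((Real.sqrt p - Real.sqrt q)^2 / 2)) / Real.log 2 := by
    simp only [Real.logb]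
    field_simp
  rw [key]
  positivity

section MainProof
open Real

lemma half_logb (x : ℝ) (hx : 0 ≤ x) :
    (1/2)*x * Real.logb 2 ((1/2)*x) = (1/2)*x*Real.logb 2 x - (1/2)*x := by
  rcases eq_or_lt_of_le hx with rfl | hx'
  · simp
  · have hl2 : Real.log 2 ≠ 0 := ne_of_gt (Real.log_pos one_lt_two)
    have : Real.logb 2 ((1/2)*x) = Real.logb 2 x - 1 := by
      rw [Real.logb, Real.logb, Real.log_mul (by norm_num) (ne_of_gt hx'),
        show Real.log (1/2 : ℝ) = -Real.log 2 by rw [show (1/2:ℝ) = 2⁻¹ by norm_num, Real.log_inv]]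
      field_simp
      ring
    rw [this]; ring

/-- For X uniform on two inputs and a randomized map Π,
I[X : Π(X)] ≥ h²(Π(x₁), Π(x₂)). -/
theorem mutualInfo_ge_hellinger_sq {Ω : Type*} [Fintype Ω] [DecidableEq Ω]
    (Pi : Bool → Ω → ℝ) (h0 : IsPMF (Pi false)) (h1 : IsPMF (Pi true)) :
    mutualInfo (fun bω : Bool × Ω => (1/2) * Pi bω.1 bω.2) Prod.fst Prod.snd
      ≥ hellinger (Pi false) (Pi true) ^ 2 := by
  classical
  obtain ⟨hn0, hs0⟩ := h0
  obtain ⟨hn1, hs1⟩ := h1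
  set p : Bool × Ω → ℝ := fun bω => (1/2) * Pi bω.1 bω.2 with hp
  have hl2 : Real.log 2 ≠ 0 := ne_of_gt (Real.log_pos one_lt_two)
  have probfst : ∀ b, prob p Prod.fst b = 1/2 := by
    intro b
    cases b <;>
      simp [prob, Fintype.sum_prod_type, Fintype.sum_bool, ← Finset.mul_sum, hs0, hs1, hp]
  have entfst : entropy p Prod.fst = 1 := by
    have hhalf : Real.logb 2 ((1:ℝ)/2) = -1 := by
      rw [show (1/2:ℝ) = 2⁻¹ by norm_num, Real.logb, Real.log_inv]
      field_simp
    rw [entropy, Fintype.sum_bool, probfst, probfst, hhalf]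
    norm_num
  have probsnd : ∀ ω, prob p Prod.snd ω = (Pi false ω + Pi true ω)/2 := by
    intro ω
    simp [prob, Fintype.sum_prod_type, Fintype.sum_bool, Finset.sum_ite_eq', hp]
    ring
  have probpair : ∀ y : Bool × Ω, prob p (fun x : Bool × Ω => (x.1, x.2)) y = p y := by
    intro y
    simp [prob, Finset.sum_ite_eq']
  have hsump : ∑ y : Bool × Ω, p y = 1 := by
    rw [Fintype.sum_prod_type, Fintype.sum_bool]
    simp only [hp]
    rw [← Finset.mul_sum, ← Finset.mul_sum, hs0, hs1]
    norm_num
  have entpair : entropy p (fun x : Bool × Ω => (x.1, x.2))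
      = -(∑ y : Bool × Ω, ((1/2) * Pi y.1 y.2 * Real.logb 2 (Pi y.1 y.2))) + 1 := by
    rw [entropy]
    have e1 : ∀ y : Bool × Ω, prob p (fun x : Bool × Ω => (x.1, x.2)) y
        * Real.logb 2 (prob p (fun x : Bool × Ω => (x.1, x.2)) y)
        = (1/2) * Pi y.1 y.2 * Real.logb 2 (Pi y.1 y.2) - (1/2) * Pi y.1 y.2 := by
      intro y
      rw [probpair y]
      simp only [hp]
      exact half_logb (Pi y.1 y.2) (by cases y with
        | mk b ω => cases b; exacts [hn0 ω, hn1 ω])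
    rw [Finset.sum_congr rfl (fun y _ => e1 y), Finset.sum_sub_distrib]
    have : ∑ y : Bool × Ω, (1/2) * Pi y.1 y.2 = 1 := hsump
    rw [this]
    ring
  have entsnd : entropy p Prod.snd
      = -∑ ω, ((Pi false ω + Pi true ω)/2) * Real.logb 2 ((Pi false ω + Pi true ω)/2) := by
    rw [entropy]
    congr 1
    exact Finset.sum_congr rfl (fun ω _ => by rw [probsnd ω])
  have keysum : mutualInfo p Prod.fst Prod.snd
      = ∑ ω, (Pi false ω/2 * (Real.logb 2 (Pi false ω) - Real.logb 2 ((Pi false ω + Pi true ω)/2))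
            + Pi true ω/2 * (Real.logb 2 (Pi true ω) - Real.logb 2 ((Pi false ω + Pi true ω)/2))) := by
    rw [mutualInfo, entfst, entsnd, entpair]
    rw [Fintype.sum_prod_type, Fintype.sum_bool]
    rw [← Finset.sum_add_distrib]
    have : (1:ℝ) + -∑ ω, ((Pi false ω + Pi true ω)/2) * Real.logb 2 ((Pi false ω + Pi true ω)/2)
        - (-(∑ ω, ((1/2) * Pi true ω * Real.logb 2 (Pi true ω)
            + (1/2) * Pi false ω * Real.logb 2 (Pi false ω))) + 1)
        = ∑ ω, (((1/2) * Pi true ω * Real.logb 2 (Pi true ω)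
            + (1/2) * Pi false ω * Real.logb 2 (Pi false ω))
          - ((Pi false ω + Pi true ω)/2) * Real.logb 2 ((Pi false ω + Pi true ω)/2)) := by
      rw [Finset.sum_sub_distrib]
      ring
    rw [this]
    exact Finset.sum_congr rfl (fun ω _ => by ring)
  have hellsq : hellinger (Pi false) (Pi true) ^ 2
      = ∑ ω, (Real.sqrt (Pi false ω) - Real.sqrt (Pi true ω))^2 / 2 := by
    rw [hellinger, Real.sq_sqrt (by positivity)]
    rw [Finset.mul_sum]
    exact Finset.sum_congr rfl (fun ω _ => by ring)
  rw [ge_iff_le, keysum, hellsq]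
  apply Finset.sum_le_sum
  intro ω _
  exact pointwise2 (Pi false ω) (Pi true ω) (hn0 ω) (hn1 ω)
end MainProof
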